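/- Assume q ≡ 1 (mod 4) and q ≢ 1 (mod 3). Let a, b, c ∈ E* be pairwise distinct with N(a) = N(b) = N(c) = 1 and T(a²) = T(b²) = T(c²) = 0. Then 2·T(ab)·T(ac)·T(bc) is a nonzero square in F. -/

import Mathlib

/-- Lagrange-type identity step: two isotropic orthogonal vectors for the
standard form on `E³` have vanishing `2×2` minors. -/
lemma minor_sq_zero {E : Type*} [CommRing E] (x0 x1 x2 y0 y1 y2 : E)
    (hx : x0 ^ 2 + x1 ^ 2 + x2 ^ 2 = 0) (hy : y0 ^ 2 + y1 ^ 2 + y2 ^ 2 = 0)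
    (hxy : x0 * y0 + x1 * y1 + x2 * y2 = 0) :
    (x0 * y1 - x1 * y0) ^ 2 = 0 := by
  linear_combination (y0 ^ 2 + y1 ^ 2) * hx - x2 ^ 2 * hy +
    (2 * x2 * y2 - (x0 * y0 + x1 * y1 + x2 * y2)) * hxy

/-- Let `q = p^h` be a prime power with `q ≡ 1 (mod 4)` and
`q ≢ 1 (mod 3)`, `E = 𝔽_{q³}`, `T x = x^{q²} + x^q + x` the relative trace and
`N x = x^{q²+q+1}` the relative norm.  If `a, b, c ∈ E*` are pairwise distinct
with `N a = N b = N c = 1` and `T(a²) = T(b²) = T(c²) = 0`, then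
`2·T(ab)·T(ac)·T(bc)` is a nonzero square in the subfield `F = {x : x^q = x}`. -/
theorem stmt_7 {p h q : ℕ} (hp : p.Prime) (hh : 0 < h) (hq : q = p ^ h)
    (hq4 : q % 4 = 1) (hq3 : q % 3 ≠ 1)
    {E : Type*} [Field E] [Fintype E] (hE : Fintype.card E = q ^ 3)
    (T N : E → E)
    (hT : ∀ x, T x = x ^ q ^ 2 + x ^ q + x)
    (hN : ∀ x, N x = x ^ (q ^ 2 + q + 1))
    (a b c : E) (ha : a ≠ 0) (hb : b ≠ 0) (hc : c ≠ 0)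
    (hab : a ≠ b) (hac : a ≠ c) (hbc : b ≠ c)
    (hNa : N a = 1) (hNb : N b = 1) (hNc : N c = 1)
    (hTa : T (a ^ 2) = 0) (hTb : T (b ^ 2) = 0) (hTc : T (c ^ 2) = 0) :
    ∃ s : E, s ^ q = s ∧ s ≠ 0 ∧
      2 * T (a * b) * T (a * c) * T (b * c) = s ^ 2 := by
  -- basic facts about the characteristic
  haveI : Fact p.Prime := ⟨hp⟩
  have hq1 : 1 < q := by
    subst hq; exact Nat.one_lt_pow hh.ne' hp.one_lt
  have hp2 : p ≠ 2 := by
    rintro rfl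
    subst hq
    -- q = 2^h with h > 0 : q % 4 ∈ {0, 2}
    rcases Nat.lt_or_ge h 2 with h1 | h1
    · interval_cases h <;> simp_all
    · have : 4 ∣ 2 ^ h := by
        calc (4:ℕ) = 2 ^ 2 := rfl
        _ ∣ 2 ^ h := pow_dvd_pow 2 h1
      omega
  have hcharE : CharP E p := by
    have h0 : (q : E) ^ 3 = 0 := by
      rw [← Nat.cast_pow, ← hE]
      exact FiniteField.cast_card_eq_zero E
    have hq0 : (q : E) = 0 := pow_eq_zero_iff (n := 3) (by norm_num) |>.mp h0
    have hp0 : (p : E) = 0 := by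
      subst hq
      push_cast at hq0
      exact pow_eq_zero_iff hh.ne' |>.mp hq0
    haveI := ringChar.charP E
    have hdvd : ringChar E ∣ p := (ringChar.spec E p).mp (by exact_mod_cast hp0)
    have hne : ringChar E ≠ 0 := CharP.char_ne_zero_of_finite E (ringChar E)
    have hrc : ringChar E = p :=
      (Nat.prime_dvd_prime_iff_eq (CharP.char_prime_of_ne_zero E hne) hp).mp hdvd
    rw [← hrc]; exact ringChar.charP E
  have h2 : (2 : E) ≠ 0 := by
    have := CharP.cast_eq_zero_iff E p 2
    intro h0
    have hpd : p ∣ 2 := (CharP.cast_eq_zero_iff E p 2).mp (by exact_mod_cast h0)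
    exact hp2 ((Nat.prime_dvd_prime_iff_eq hp Nat.prime_two).mp hpd)
  -- Frobenius-type facts for x ↦ x^q
  have hadd : ∀ x y : E, (x + y) ^ q = x ^ q + y ^ q := by
    intro x y; subst hq; exact add_pow_char_pow x y p h
  have hcube : ∀ x : E, ((x ^ q) ^ q) ^ q = x := by
    intro x
    rw [← pow_mul, ← pow_mul]
    have : q * (q * q) = Fintype.card E := by rw [hE]; ring
    rw [this, FiniteField.pow_card]
  -- abbreviations for conjugates
  set a1 := a ^ q with ha1
  set a2 := a1 ^ q with ha2
  set b1 := b ^ q with hb1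
  set b2 := b1 ^ q with hb2
  set c1 := c ^ q with hc1
  set c2 := c1 ^ q with hc2
  -- rewrite traces of squares
  have hsq : ∀ x : E, (x ^ 2) ^ q ^ 2 + (x ^ 2) ^ q + x ^ 2
      = ((x ^ q) ^ q) ^ 2 + (x ^ q) ^ 2 + x ^ 2 := by
    intro x
    rw [pow_two q, pow_mul, ← pow_right_comm x q 2, ← pow_right_comm (x ^ q) q 2]
  have HA : a2 ^ 2 + a1 ^ 2 + a ^ 2 = 0 := by
    rw [hT] at hTa; rw [ha2, ha1, ← hsq]; exact hTa
  have HB : b2 ^ 2 + b1 ^ 2 + b ^ 2 = 0 := by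
    rw [hT] at hTb; rw [hb2, hb1, ← hsq]; exact hTb
  have HC : c2 ^ 2 + c1 ^ 2 + c ^ 2 = 0 := by
    rw [hT] at hTc; rw [hc2, hc1, ← hsq]; exact hTc
  -- rewrite norms
  have hnorm : ∀ x : E, x ^ (q ^ 2 + q + 1) = ((x ^ q) ^ q) * x ^ q * x := by
    intro x
    rw [pow_add, pow_add, pow_one, pow_two, pow_mul]
  have Na : a2 * a1 * a = 1 := by rw [hN, hnorm] at hNa; rw [ha2, ha1]; exact hNa
  have Nb : b2 * b1 * b = 1 := by rw [hN, hnorm] at hNb; rw [hb2, hb1]; exact hNb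
  have Nc : c2 * c1 * c = 1 := by rw [hN, hnorm] at hNc; rw [hc2, hc1]; exact hNc
  -- traces of products
  have hTmul : ∀ x y : E, T (x * y)
      = ((x ^ q) ^ q) * ((y ^ q) ^ q) + x ^ q * y ^ q + x * y := by
    intro x y
    rw [hT, pow_two q, pow_mul, mul_pow, mul_pow]
  have hTab : T (a * b) = a2 * b2 + a1 * b1 + a * b := by
    rw [hTmul, ← ha1, ← hb1, ← ha2, ← hb2]
  have hTac : T (a * c) = a2 * c2 + a1 * c1 + a * c := by
    rw [hTmul, ← ha1, ← hc1, ← ha2, ← hc2]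
  have hTbc : T (b * c) = b2 * c2 + b1 * c1 + b * c := by
    rw [hTmul, ← hb1, ← hc1, ← hb2, ← hc2]
  -- key nonvanishing lemma for a pair
  have key : ∀ x y : E, x ≠ 0 → y ≠ 0 → x ≠ y →
      (x ^ q) ^ q * (x ^ q) * x = 1 → (y ^ q) ^ q * (y ^ q) * y = 1 →
      ((x ^ q) ^ q) ^ 2 + (x ^ q) ^ 2 + x ^ 2 = 0 →
      ((y ^ q) ^ q) ^ 2 + (y ^ q) ^ 2 + y ^ 2 = 0 →
      ((x ^ q) ^ q) * ((y ^ q) ^ q) + (x ^ q) * (y ^ q) + x * y ≠ 0 := by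
    intro x y hx0 hy0 hxy hNx hNy hQx hQy hcontra
    set x1 := x ^ q with hx1d
    set x2 := x1 ^ q with hx2d
    set y1 := y ^ q with hy1d
    set y2 := y1 ^ q with hy2d
    -- all 2×2 minors vanish
    have hm3 : x * y1 - x1 * y = 0 := by
      have := minor_sq_zero x x1 x2 y y1 y2 (by linear_combination hQx) (by linear_combination hQy) (by linear_combination hcontra)
      exact pow_eq_zero_iff (by norm_num) |>.mp this
    have hm2 : x * y2 - x2 * y = 0 := by
      have := minor_sq_zero x x2 x1 y y2 y1 (by linear_combination hQx) (by linear_combination hQy) (by linear_combination hcontra)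
      exact pow_eq_zero_iff (by norm_num) |>.mp this
    -- hence y is proportional to x with ratio μ
    set μ := y / x with hμ
    have hy1 : y1 = μ * x1 := by
      rw [hμ, div_mul_eq_mul_div, eq_div_iff hx0]
      linear_combination hm3
    have hy2 : y2 = μ * x2 := by
      rw [hμ, div_mul_eq_mul_div, eq_div_iff hx0]
      linear_combination hm2
    have hyx : y = μ * x := by rw [hμ, div_mul_eq_mul_div, eq_div_iff hx0]
    -- μ is in F
    have hμ0 : μ ≠ 0 := div_ne_zero hy0 hx0
    have hx10 : x1 ≠ 0 := pow_ne_zero q hx0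
    have hμq : μ ^ q = μ := by
      have : y1 = μ ^ q * x1 := by rw [hy1d, hyx, mul_pow, ← hx1d]
      have h' : μ ^ q * x1 = μ * x1 := by rw [← this, hy1]
      exact mul_right_cancel₀ hx10 h'
    -- μ³ = 1
    have hμ3 : μ ^ 3 = 1 := by
      have : y2 * y1 * y = (μ ^ 3) * (x2 * x1 * x) := by
        rw [hy2, hy1, hyx]; ring
      rw [hNy, hNx, mul_one] at this
      exact this.symm
    -- q % 3 ≠ 1 forces μ = 1
    have hμ1 : μ = 1 := by
      have hqd : q = 3 * (q / 3) + q % 3 := (Nat.div_add_mod q 3).symm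
      have hμq' : μ = μ ^ (q % 3) := by
        calc μ = μ ^ q := hμq.symm
        _ = (μ ^ 3) ^ (q / 3) * μ ^ (q % 3) := by
          rw [← pow_mul, ← pow_add, ← hqd]
        _ = μ ^ (q % 3) := by rw [hμ3, one_pow, one_mul]
      have h3 : q % 3 = 0 ∨ q % 3 = 2 := by omega
      rcases h3 with h3 | h3
      · rw [h3, pow_zero] at hμq'; exact hμq'
      · rw [h3] at hμq'
        have hmm : μ * μ = μ * 1 := by rw [mul_one, ← pow_two]; exact hμq'.symm
        exact mul_left_cancel₀ hμ0 hmm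
    exact hxy (by rw [hyx, hμ1, one_mul])
  -- the three traces are nonzero
  have hab0 : a2 * b2 + a1 * b1 + a * b ≠ 0 := by
    rw [ha2, ha1, hb2, hb1]
    exact key a b ha hb hab (by rw [← ha1, ← ha2]; exact Na) (by rw [← hb1, ← hb2]; exact Nb)
      (by rw [← ha1, ← ha2]; exact HA) (by rw [← hb1, ← hb2]; exact HB)
  have hac0 : a2 * c2 + a1 * c1 + a * c ≠ 0 := by
    rw [ha2, ha1, hc2, hc1]
    exact key a c ha hc hac (by rw [← ha1, ← ha2]; exact Na) (by rw [← hc1, ← hc2]; exact Nc)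
      (by rw [← ha1, ← ha2]; exact HA) (by rw [← hc1, ← hc2]; exact HC)
  have hbc0 : b2 * c2 + b1 * c1 + b * c ≠ 0 := by
    rw [hb2, hb1, hc2, hc1]
    exact key b c hb hc hbc (by rw [← hb1, ← hb2]; exact Nb) (by rw [← hc1, ← hc2]; exact Nc)
      (by rw [← hb1, ← hb2]; exact HB) (by rw [← hc1, ← hc2]; exact HC)
  -- the square root: the conjugate determinant
  refine ⟨a * (b1 * c2 - b2 * c1) - a1 * (b * c2 - b2 * c) + a2 * (b * c1 - b1 * c),
    ?_, ?_, ?_⟩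
  · -- s^q = s
    have hmul : ∀ x y : E, (x * y) ^ q = x ^ q * y ^ q := fun x y => mul_pow x y q
    have hsub : ∀ x y : E, (x - y) ^ q = x ^ q - y ^ q := by
      intro x y; subst hq; exact sub_pow_char_pow x y h
    rw [hadd, hsub, hmul, hmul, hmul, hsub, hmul, hmul, hsub, hmul, hmul,
      hsub, hmul, hmul, ← ha1, ← hb1, ← hc1, ← ha2, ← hb2, ← hc2]
    rw [ha2, ha1, hb2, hb1, hc2, hc1, hcube a, hcube b, hcube c,
      ← ha1, ← hb1, ← hc1, ← ha2, ← hb2, ← hc2]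
    ring
  · -- s ≠ 0
    intro hs0
    have hsq2 : (a * (b1 * c2 - b2 * c1) - a1 * (b * c2 - b2 * c) + a2 * (b * c1 - b1 * c)) ^ 2
        = 2 * (a2 * b2 + a1 * b1 + a * b) * (a2 * c2 + a1 * c1 + a * c)
          * (b2 * c2 + b1 * c1 + b * c) := by
      linear_combination ((b2 ^ 2 + b1 ^ 2 + b ^ 2) * (c2 ^ 2 + c1 ^ 2 + c ^ 2)
          - (b2 * c2 + b1 * c1 + b * c) ^ 2) * HA
        - (a2 * c2 + a1 * c1 + a * c) ^ 2 * HB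
        - (a2 * b2 + a1 * b1 + a * b) ^ 2 * HC
    rw [hs0] at hsq2
    have h00 : ((0 : E)) ^ 2 = 0 := by norm_num
    rw [h00] at hsq2
    have hzz := hsq2.symm
    rcases mul_eq_zero.mp hzz with h' | h'
    · rcases mul_eq_zero.mp h' with h'' | h''
      · rcases mul_eq_zero.mp h'' with h3 | h3
        · exact h2 h3
        · exact hab0 h3
      · exact hac0 h''
    · exact hbc0 h'
  · -- the square identity
    rw [hTab, hTac, hTbc]
    linear_combination -((b2 ^ 2 + b1 ^ 2 + b ^ 2) * (c2 ^ 2 + c1 ^ 2 + c ^ 2)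
        - (b2 * c2 + b1 * c1 + b * c) ^ 2) * HA
      + (a2 * c2 + a1 * c1 + a * c) ^ 2 * HB
      + (a2 * b2 + a1 * b1 + a * b) ^ 2 * HC
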